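/- Define R̃(c, z) := z + z/(2(e^{cz} − 1)) + c·z²/(2(e^z − 1 − z)) for z < 0 (this equals z + 1/(2c·φ1(cz)) + c/(2·φ2(z)), the underestimated average dissipation rate of the one-parameter second-order EERK method with abscissa c). Then for every c ∈ (0, 1), R̃(c, z) tends to −∞ as z → −∞, while for c = 1, R̃(1, z) tends to 1/2 as z → −∞. -/

import Mathlib

open Filter

lemma aux_mul_exp (c : ℝ) (hc : 0 < c) :
    Tendsto (fun z : ℝ => z * Real.exp (c * z)) atBot (nhds 0) := by
  have h1 := Real.tendsto_pow_mul_exp_neg_atTop_nhds_zero 1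
  have h2 : Tendsto (fun z : ℝ => -(c * z)) atBot atTop :=
    tendsto_neg_atBot_atTop.comp ((tendsto_const_mul_atBot_of_pos hc).mpr tendsto_id)
  have h3 := (h1.comp h2).const_mul (-1/c)
  rw [mul_zero] at h3
  refine h3.congr (fun z => ?_)
  simp only [Function.comp, pow_one, neg_neg]
  field_simp

lemma aux_exp_cz (c : ℝ) (hc : 0 < c) :
    Tendsto (fun z : ℝ => Real.exp (c * z)) atBot (nhds 0) :=
  Real.tendsto_exp_atBot.comp ((tendsto_const_mul_atBot_of_pos hc).mpr tendsto_id)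

lemma aux_exp_div :
    Tendsto (fun z : ℝ => (Real.exp z - 1) / z) atBot (nhds 0) := by
  have h1 : Tendsto (fun z : ℝ => -(Real.exp z - 1)) atBot (nhds 1) := by
    have := Real.tendsto_exp_atBot.sub (tendsto_const_nhds (α := ℝ) (x := (1:ℝ)))
    simpa using this.neg
  have h2 : Tendsto (fun z : ℝ => -z) atBot atTop := tendsto_neg_atBot_atTop
  have h3 := h1.div_atTop h2
  refine h3.congr (fun z => ?_)
  rw [neg_div_neg_eq]

/-- Decomposition lemma: for `z < 0` and `0 < c`,
the formula equals `z*(1-c)/2 + (z e^{cz})/(2(e^{cz}-1)) + c (e^z-1)/(2((e^z-1)/z - 1))`. -/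
lemma aux_decomp (c z : ℝ) (hc : 0 < c) (hz : z < 0) :
    z + z / (2 * (Real.exp (c * z) - 1)) + c * z ^ 2 / (2 * (Real.exp z - 1 - z))
      = z * (1 - c) / 2 + (z * Real.exp (c * z)) / (2 * (Real.exp (c * z) - 1))
        + c * ((Real.exp z - 1) / (2 * ((Real.exp z - 1) / z - 1))) := by
  have hz0 : z ≠ 0 := ne_of_lt hz
  have h1 : Real.exp (c * z) - 1 ≠ 0 := by
    have : Real.exp (c * z) < 1 := by
      rw [← Real.exp_zero]
      exact Real.exp_lt_exp.mpr (mul_neg_of_pos_of_neg hc hz)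
    linarith
  have h2 : Real.exp z - 1 - z > 0 := by
    have := Real.add_one_lt_exp hz0
    linarith
  have h3 : (Real.exp z - 1) / z - 1 ≠ 0 := by
    rw [div_sub_one hz0]
    exact div_ne_zero (by linarith) hz0
  rw [div_sub_one hz0] at h3 ⊢
  have h2' : Real.exp z - 1 - z ≠ 0 := ne_of_gt h2
  generalize Real.exp (c * z) = E at h1 ⊢
  generalize Real.exp z = F at h2' h3 ⊢
  field_simp
  ring

/-- The limit of the decomposed remainder (everything but `z*(1-c)/2`). -/
lemma aux_tail (c : ℝ) (hc : 0 < c) :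
    Tendsto (fun z : ℝ => (z * Real.exp (c * z)) / (2 * (Real.exp (c * z) - 1))
        + c * ((Real.exp z - 1) / (2 * ((Real.exp z - 1) / z - 1)))) atBot
      (nhds (c / 2)) := by
  have T2 : Tendsto (fun z : ℝ => (z * Real.exp (c * z)) / (2 * (Real.exp (c * z) - 1)))
      atBot (nhds 0) := by
    have hden : Tendsto (fun z : ℝ => 2 * (Real.exp (c * z) - 1)) atBot (nhds (-2)) := by
      have := ((aux_exp_cz c hc).sub (tendsto_const_nhds (x := (1:ℝ)))).const_mul 2
      simpa using this
    have := (aux_mul_exp c hc).div hden (by norm_num)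
    simpa using (show Tendsto (fun z : ℝ => (z * Real.exp (c * z)) / (2 * (Real.exp (c * z) - 1))) atBot (nhds (0 / -2)) from this)
  have T3 : Tendsto (fun z : ℝ => c * ((Real.exp z - 1) / (2 * ((Real.exp z - 1) / z - 1))))
      atBot (nhds (c / 2)) := by
    have hnum : Tendsto (fun z : ℝ => Real.exp z - 1) atBot (nhds (-1)) := by
      have := Real.tendsto_exp_atBot.sub (tendsto_const_nhds (x := (1:ℝ)))
      simpa using this
    have hden : Tendsto (fun z : ℝ => 2 * ((Real.exp z - 1) / z - 1)) atBot (nhds (-2)) := by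
      have := ((aux_exp_div).sub (tendsto_const_nhds (x := (1:ℝ)))).const_mul 2
      simpa using this
    have := (hnum.div hden (by norm_num)).const_mul c
    convert this using 2
    norm_num
    ring
  have := T2.add T3
  simpa using this

theorem stmt_19 (R : ℝ → ℝ → ℝ)
    (hR : ∀ c z : ℝ, z < 0 →
      R c z = z + z / (2 * (Real.exp (c * z) - 1))
        + c * z ^ 2 / (2 * (Real.exp z - 1 - z))) :
    (∀ c : ℝ, c ∈ Set.Ioo (0 : ℝ) 1 →
      Filter.Tendsto (fun z => R c z) Filter.atBot Filter.atBot)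
    ∧ Filter.Tendsto (fun z => R 1 z) Filter.atBot (nhds (1/2)) := by
  constructor
  · intro c hc
    obtain ⟨hc0, hc1⟩ := hc
    have heq : (fun z => R c z) =ᶠ[atBot]
        (fun z => z * (1 - c) / 2 + ((z * Real.exp (c * z)) / (2 * (Real.exp (c * z) - 1))
          + c * ((Real.exp z - 1) / (2 * ((Real.exp z - 1) / z - 1))))) := by
      filter_upwards [eventually_lt_atBot (0 : ℝ)] with z hz
      rw [hR c z hz, aux_decomp c z hc0 hz]; ring
    rw [Filter.tendsto_congr' heq]
    have h1 : Tendsto (fun z : ℝ => z * (1 - c) / 2) atBot atBot := by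
      have hpos : (0 : ℝ) < (1 - c) / 2 := by linarith
      have := (tendsto_mul_const_atBot_of_pos hpos).mpr (tendsto_id (α := ℝ) (x := atBot))
      refine this.congr (fun z => ?_)
      simp [mul_div_assoc]
    exact h1.atBot_add (aux_tail c hc0)
  · have heq : (fun z => R 1 z) =ᶠ[atBot]
        (fun z => (z * Real.exp (1 * z)) / (2 * (Real.exp (1 * z) - 1))
          + 1 * ((Real.exp z - 1) / (2 * ((Real.exp z - 1) / z - 1)))) := by
      filter_upwards [eventually_lt_atBot (0 : ℝ)] with z hz
      rw [hR 1 z hz, aux_decomp 1 z one_pos hz]; ring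
    rw [Filter.tendsto_congr' heq]
    have := aux_tail 1 one_pos
    norm_num at this ⊢
    exact this
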